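/- Let D be a finite index type with family S : D → Type of nonempty finite types, and let f be a positive pmf on ∏_{j∈D} S j. Let a_i, b_i ⊆ D for i ∈ Fin L (taken cyclically) with a_i ∩ b_i = ∅, c_i = a_i ∪ b_i, and b_{i+1} ⊆ c_i for all i, and let f_i(x_{a_i}|x_{b_i}) = f_{c_i}(x_{a_i}, x_{b_i}) / f_{b_i}(x_{b_i}) be the conditional pmfs derived from f. Then the marginals {f_{c_i} : 1 ≤ i ≤ L} are mutually stationary: for every i, applying the conditional replacement operator yields T_i(f_{c_i}) = f_{c_{i+1}}, i.e. f_{i+1}(x_{a_{i+1}}|x_{b_{i+1}}) · f_{b_{i+1}}(x_{b_{i+1}}) = f_{c_{i+1}}(x_{a_{i+1}}, x_{b_{i+1}}) for all arguments. -/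
import Mathlib


noncomputable section

variable {D : Type*}

/-- Configurations of the coordinates indexed by a finite set `c ⊆ D`. -/
abbrev Cfg (S : D → Type*) (c : Finset D) : Type _ := ∀ j : c, S j

/-- The `b`-marginal of a function `h` on the `c`-coordinates, for `b ⊆ c`. -/
def marg (S : D → Type*) [DecidableEq D] [∀ j, Fintype (S j)] [∀ j, DecidableEq (S j)]
    {b c : Finset D} (hbc : b ⊆ c) (h : Cfg S c → ℝ) : Cfg S b → ℝ :=
  fun xb => ∑ x : Cfg S c, if (fun j : b => x ⟨j.1, hbc j.2⟩) = xb then h x else 0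

/-- The conditional replacement operator `T (h) = f (x_a | x_b) * h_b (x_b)`. -/
def condRepl (S : D → Type*) [DecidableEq D] [∀ j, Fintype (S j)] [∀ j, DecidableEq (S j)]
    {a b c : Finset D} (hbc : b ⊆ c) (f : Cfg S a → Cfg S b → ℝ) (h : Cfg S c → ℝ) :
    Cfg S (a ∪ b) → ℝ :=
  fun x => f (fun j : a => x ⟨j.1, Finset.mem_union_left b j.2⟩)
             (fun j : b => x ⟨j.1, Finset.mem_union_right a j.2⟩) *
           marg S hbc h (fun j : b => x ⟨j.1, Finset.mem_union_right a j.2⟩)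

/-- Combine configurations on disjoint `a` and `b` into one on `a ∪ b`. -/
def unionGlue (S : D → Type*) [DecidableEq D] {a b : Finset D}
    (xa : Cfg S a) (xb : Cfg S b) : Cfg S (a ∪ b) :=
  fun j => if hj : j.1 ∈ a then xa ⟨j.1, hj⟩
           else xb ⟨j.1, (Finset.mem_union.mp j.2).resolve_left hj⟩


lemma marg_marg {D : Type*} [Fintype D] [DecidableEq D]
    (S : D → Type*) [∀ j, Fintype (S j)] [∀ j, DecidableEq (S j)]
    {b c : Finset D} (hbc : b ⊆ c) (h : Cfg S (Finset.univ : Finset D) → ℝ) :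
    marg S hbc (marg S (Finset.subset_univ c) h) = marg S (Finset.subset_univ b) h := by
  funext xb
  unfold marg
  have step1 : (∑ x : Cfg S c,
      if (fun j : b => x ⟨j.1, hbc j.2⟩) = xb then
        ∑ y : Cfg S Finset.univ,
          if (fun j : c => y ⟨j.1, Finset.mem_univ _⟩) = x then h y else 0
      else 0) =
      ∑ x : Cfg S c, ∑ y : Cfg S Finset.univ,
        if (fun j : c => y ⟨j.1, Finset.mem_univ _⟩) = x then
          (if (fun j : b => x ⟨j.1, hbc j.2⟩) = xb then h y else 0) else 0 := by
    refine Finset.sum_congr rfl fun x _ => ?_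
    by_cases hx : (fun j : b => x ⟨j.1, hbc j.2⟩) = xb
    · simp [hx]
    · simp [hx]
  rw [step1, Finset.sum_comm]
  refine Finset.sum_congr rfl fun y _ => ?_
  rw [Finset.sum_eq_single (fun j : c => y ⟨j.1, Finset.mem_univ _⟩)]
  · rw [if_pos rfl]
  · intro x _ hx
    exact if_neg (fun hh => hx hh.symm)
  · intro hx; exact absurd (Finset.mem_univ _) hx

lemma marg_pos {D : Type*} [Fintype D] [DecidableEq D]
    (S : D → Type*) [∀ j, Fintype (S j)] [∀ j, DecidableEq (S j)] [∀ j, Nonempty (S j)]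
    (f : Cfg S (Finset.univ : Finset D) → ℝ) (hfpos : ∀ x, 0 < f x)
    {b : Finset D} (xb : Cfg S b) :
    0 < marg S (Finset.subset_univ b) f xb := by
  unfold marg
  apply Finset.sum_pos'
  · intro x _
    split <;> [exact (hfpos x).le; exact le_rfl]
  · refine ⟨fun j => if hj : j.1 ∈ b then xb ⟨j.1, hj⟩ else Classical.arbitrary _,
      Finset.mem_univ _, ?_⟩
    rw [if_pos]
    · exact hfpos _
    · funext j; exact dif_pos j.2

lemma unionGlue_restrict {D : Type*} [DecidableEq D] (S : D → Type*)
    {a b : Finset D} (x : Cfg S (a ∪ b)) :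
    unionGlue S (fun j : a => x ⟨j.1, Finset.mem_union_left b j.2⟩)
      (fun j : b => x ⟨j.1, Finset.mem_union_right a j.2⟩) = x := by
  funext j
  unfold unionGlue
  split <;> rfl

/-- **The marginals `f_{c_i}` of a joint pmf are mutually stationary.**
Let `f` be a positive pmf on all of the `D`-coordinates, `⟨a i, b i⟩` a
permissible updating cycle with `a i ∩ b i = ∅` and `b (i+1) ⊆ c i = a i ∪ b i`,
and let `fc i` be the conditional pmf of the `a i`-coordinates given the
`b i`-coordinates derived from `f`.  Then for every `i`, applying the
conditional replacement operator to the `c i`-marginal of `f` yields the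
`c (i+1)`-marginal of `f`: `T_i (f_{c_i}) = f_{c_{i+1}}`. -/
theorem marginals_mutually_stationary
    {D : Type*} [Fintype D] [DecidableEq D]
    (S : D → Type*) [∀ j, Fintype (S j)] [∀ j, DecidableEq (S j)] [∀ j, Nonempty (S j)]
    (f : Cfg S (Finset.univ : Finset D) → ℝ)
    (hfpos : ∀ x, 0 < f x) (hfsum : ∑ x, f x = 1)
    {L : ℕ} [NeZero L] (a b : Fin L → Finset D)
    (hdisj : ∀ i, Disjoint (a i) (b i))
    (hcyc : ∀ i, b (i + 1) ⊆ a i ∪ b i)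
    (fc : ∀ i, Cfg S (a i) → Cfg S (b i) → ℝ)
    (hfc : ∀ i (xa : Cfg S (a i)) (xb : Cfg S (b i)),
      fc i xa xb =
        marg S (Finset.subset_univ (a i ∪ b i)) f (unionGlue S xa xb) /
          marg S (Finset.subset_univ (b i)) f xb) :
    ∀ i : Fin L,
      condRepl S (hcyc i) (fc (i + 1))
          (marg S (Finset.subset_univ (a i ∪ b i)) f) =
        marg S (Finset.subset_univ (a (i + 1) ∪ b (i + 1))) f := by
  intro i
  funext x
  unfold condRepl
  rw [hfc, marg_marg, unionGlue_restrict,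
    div_mul_cancel₀ _ (marg_pos S f hfpos _).ne']
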